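/- For k < l in [d], h_{kl} is a fundamental hole of the CDEM semigroup: for every pair (i,j) ∈ [d]², the vector h_{kl} − a_{ij} is not in Q_sat = K(A) ∩ ℤ^{2d+1}. -/

import Mathlib

open Finset

/-- The column `a_{ij}` of the CDEM matrix: 1 in coordinate `j`, 1 in coordinate
`d + i`, 1 in coordinate `2d` (the last one) iff `i = j`, and 0 elsewhere
(coordinates are 0-based). -/
def acol (d : ℕ) (i j : Fin d) : Fin (2 * d + 1) → ℤ := fun t =>
  (if (t : ℕ) = (j : ℕ) then 1 else 0) +
  (if (t : ℕ) = d + (i : ℕ) then 1 else 0) +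
  (if (t : ℕ) = 2 * d ∧ i = j then 1 else 0)

/-- The vector `h_{kl} = (a_{ll} + a_{lk} + a_{kl} + a_{kk}) / 2`. -/
def hvec (d : ℕ) (k l : Fin d) : Fin (2 * d + 1) → ℤ := fun t =>
  (acol d l l t + acol d l k t + acol d k l t + acol d k k t) / 2

/-- The CDEM semigroup: nonnegative integer combinations of the columns. -/
def cdemQ (d : ℕ) : Set (Fin (2 * d + 1) → ℤ) :=
  {b | ∃ x : Fin d → Fin d → ℕ, b = fun t => ∑ i, ∑ j, (x i j : ℤ) * acol d i j t}

/-- The real cone `K(A)` generated by the CDEM columns. -/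
def cdemCone (d : ℕ) (v : Fin (2 * d + 1) → ℝ) : Prop :=
  ∃ x : Fin d → Fin d → ℝ, (∀ i j, 0 ≤ x i j) ∧
    v = fun t => ∑ i, ∑ j, x i j * (acol d i j t : ℝ)

/-- The saturation `Q_sat = K(A) ∩ ℤ^{2d+1}` of the CDEM semigroup. -/
def cdemQsat (d : ℕ) : Set (Fin (2 * d + 1) → ℤ) :=
  {b | cdemCone d fun t => (b t : ℝ)}

/-- The `i`-th coordinate (0-based, `i < d`) as an index into `Fin (2d+1)`. -/
def idx1 (d : ℕ) (i : Fin d) : Fin (2 * d + 1) := ⟨(i : ℕ), by have := i.isLt; omega⟩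

/-- The `(d+i)`-th coordinate as an index into `Fin (2d+1)`. -/
def idx2 (d : ℕ) (i : Fin d) : Fin (2 * d + 1) := ⟨d + (i : ℕ), by have := i.isLt; omega⟩

lemma acol_idx1 (d : ℕ) (i j t : Fin d) :
    acol d i j (idx1 d t) = if t = j then 1 else 0 := by
  have ht := t.isLt
  have hi := i.isLt
  simp only [acol]
  rw [show ((idx1 d t : Fin (2 * d + 1)) : ℕ) = (t : ℕ) from rfl]
  have h2 : ¬ ((t:ℕ) = d + (i:ℕ)) := by omega
  have h3 : ¬ ((t:ℕ) = 2 * d ∧ i = j) := by rintro ⟨h, -⟩; omega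
  rw [if_neg h2, if_neg h3, add_zero, add_zero]
  simp [Fin.ext_iff]

lemma acol_idx2 (d : ℕ) (i j t : Fin d) :
    acol d i j (idx2 d t) = if t = i then 1 else 0 := by
  have ht := t.isLt
  have hj := j.isLt
  simp only [acol]
  rw [show ((idx2 d t : Fin (2 * d + 1)) : ℕ) = d + (t : ℕ) from rfl]
  have h1 : ¬ (d + (t:ℕ) = (j:ℕ)) := by omega
  have h3 : ¬ (d + (t:ℕ) = 2 * d ∧ i = j) := by rintro ⟨h, -⟩; omega
  rw [if_neg h1, if_neg h3, zero_add, add_zero]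
  simp [Fin.ext_iff]

lemma acol_top (d : ℕ) (hd : 0 < d) (i j : Fin d) :
    acol d i j ⟨2 * d, by omega⟩ = if i = j then 1 else 0 := by
  have hi := i.isLt
  have hj := j.isLt
  simp only [acol]
  have h1 : ¬ ((2*d : ℕ) = (j:ℕ)) := by omega
  have h2 : ¬ ((2*d : ℕ) = d + (i:ℕ)) := by omega
  rw [if_neg h1, if_neg h2]
  simp

lemma hvec_idx1 (d : ℕ) (k l t : Fin d) (hkl : k ≠ l) :
    hvec d k l (idx1 d t) = (if t = k then 1 else 0) + (if t = l then 1 else 0) := by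
  simp only [hvec, acol_idx1]
  by_cases h1 : t = k <;> by_cases h2 : t = l <;> simp_all

lemma hvec_idx2 (d : ℕ) (k l t : Fin d) (hkl : k ≠ l) :
    hvec d k l (idx2 d t) = (if t = k then 1 else 0) + (if t = l then 1 else 0) := by
  simp only [hvec, acol_idx2]
  by_cases h1 : t = k <;> by_cases h2 : t = l <;> simp_all

lemma hvec_top (d : ℕ) (hd : 0 < d) (k l : Fin d) (hkl : k ≠ l) :
    hvec d k l ⟨2 * d, by omega⟩ = 1 := by
  simp only [hvec, acol_top d hd]
  simp [hkl, hkl.symm]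

lemma key (d : ℕ) (x : Fin d → Fin d → ℝ) (hx : ∀ i j, 0 ≤ x i j) (m' : Fin d)
    (hcol : ∑ i', x i' m' = 1)
    (hrow : ∀ i', i' ≠ m' → ∑ j', x i' j' = 0)
    (hdiag : x m' m' = 0) : False := by
  have hz : ∀ i', x i' m' = 0 := by
    intro i'
    by_cases h : i' = m'
    · subst h; exact hdiag
    · exact (Finset.sum_eq_zero_iff_of_nonneg (fun j' _ => hx i' j')).1 (hrow i' h) m'
        (mem_univ m')
  rw [Finset.sum_eq_zero (fun i' _ => hz i')] at hcol
  norm_num at hcol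

/-- For `k < l`, `h_{kl}` is a fundamental hole of the CDEM semigroup: for every pair
`(i,j)`, the vector `h_{kl} - a_{ij}` is not in `Q_sat = K(A) ∩ ℤ^{2d+1}`. -/
theorem hvec_fundamental (d : ℕ) (hd : 2 ≤ d) (k l : Fin d) (hkl : k < l) :
    ∀ i j : Fin d, (fun t => hvec d k l t - acol d i j t) ∉ cdemQsat d := by
  intro i j hmem
  obtain ⟨x, hx, heq⟩ := hmem
  have hkl' : k ≠ l := ne_of_lt hkl
  have hd0 : 0 < d := by omega
  -- E1 : column sums
  have E1 : ∀ t : Fin d, ∑ i', x i' t =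
      (if t = k then 1 else 0) + (if t = l then 1 else 0) - (if t = j then 1 else 0) := by
    intro t
    have h := congrFun heq (idx1 d t)
    simp only [hvec_idx1 d k l t hkl', acol_idx1] at h
    push_cast at h
    rw [h]
    simp [mul_ite, Finset.sum_ite_eq]
  have E2 : ∀ t : Fin d, ∑ j', x t j' =
      (if t = k then 1 else 0) + (if t = l then 1 else 0) - (if t = i then 1 else 0) := by
    intro t
    have h := congrFun heq (idx2 d t)
    simp only [hvec_idx2 d k l t hkl', acol_idx2] at h
    push_cast at h
    rw [h]
    simp [mul_ite, Finset.sum_ite_eq]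
  have E3 : ∑ t, x t t = 1 - (if i = j then (1:ℝ) else 0) := by
    have h := congrFun heq ⟨2 * d, by omega⟩
    simp only [hvec_top d hd0 k l hkl', acol_top d hd0] at h
    push_cast at h
    rw [h]
    simp [mul_ite, Finset.sum_ite_eq]
  -- j and i must lie in {k, l}
  have hj : j = k ∨ j = l := by
    by_contra hc
    push_neg at hc
    have h2 : (0:ℝ) ≤ ∑ i', x i' j := Finset.sum_nonneg fun i' _ => hx i' j
    rw [E1 j, if_neg hc.1, if_neg hc.2, if_pos rfl] at h2
    linarith
  have hi : i = k ∨ i = l := by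
    by_contra hc
    push_neg at hc
    have h2 : (0:ℝ) ≤ ∑ j', x i j' := Finset.sum_nonneg fun j' _ => hx i j'
    rw [E2 i, if_neg hc.1, if_neg hc.2, if_pos rfl] at h2
    linarith
  by_cases hij : i = j
  · -- diagonal case: all x t t = 0
    have h3 : ∑ t, x t t = 0 := by rw [E3, if_pos hij]; ring
    have hdiag : ∀ t, x t t = 0 := fun t =>
      (Finset.sum_eq_zero_iff_of_nonneg (fun t _ => hx t t)).1 h3 t (mem_univ t)
    subst hij
    rcases hi with rfl | rfl
    · -- i = j = k (k replaced by i); take m' = l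
      refine key d x hx l ?_ ?_ (hdiag l)
      · rw [E1 l, if_neg hkl'.symm, if_pos rfl]; ring
      · intro i' h
        rw [E2 i', if_neg h]; ring
    · -- i = j = l (l replaced by i); take m' = k
      refine key d x hx k ?_ ?_ (hdiag k)
      · rw [E1 k, if_pos rfl, if_neg hkl']; ring
      · intro i' h
        rw [E2 i', if_neg h]; ring
  · -- off-diagonal case
    have h3 : ∑ t, x t t = 1 := by rw [E3, if_neg hij]; ring
    have hzero : ∀ t : Fin d, x t t = 0 := by
      rcases hi with rfl | rfl
      · rcases hj with rfl | rfl
        · exact absurd rfl hij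
        · -- (i, j) = (k, l): k ↦ i, l ↦ j
          intro t
          by_cases ht : t = j
          · subst ht
            have hcol : ∑ i', x i' t = 0 := by
              rw [E1 t, if_neg (Ne.symm hkl')]; ring
            exact (Finset.sum_eq_zero_iff_of_nonneg (fun i' _ => hx i' t)).1 hcol t (mem_univ t)
          · have hrow : ∑ j', x t j' = 0 := by
              rw [E2 t, if_neg ht]; ring
            exact (Finset.sum_eq_zero_iff_of_nonneg (fun j' _ => hx t j')).1 hrow t (mem_univ t)
      · rcases hj with rfl | rfl
        · -- (i, j) = (l, k): l ↦ i, k ↦ j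
          intro t
          by_cases ht : t = j
          · subst ht
            have hcol : ∑ i', x i' t = 0 := by
              rw [E1 t, if_neg hkl']; ring
            exact (Finset.sum_eq_zero_iff_of_nonneg (fun i' _ => hx i' t)).1 hcol t (mem_univ t)
          · have hrow : ∑ j', x t j' = 0 := by
              rw [E2 t, if_neg ht]; ring
            exact (Finset.sum_eq_zero_iff_of_nonneg (fun j' _ => hx t j')).1 hrow t (mem_univ t)
        · exact absurd rfl hij
    rw [Finset.sum_eq_zero (fun t _ => hzero t)] at h3
    norm_num at h3
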